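/- Let F : G ⊂ X × Y → Z be real-analytic between real Banach spaces with F(x₀,y₀) = 0 and the partial derivative F'_y(x₀,y₀) invertible. Then there exist neighborhoods U(x₀), U(y₀) with U(x₀) × U(y₀) ⊂ G and a unique map y : U(x₀) → U(y₀) with F(x, y(x)) = 0 on U(x₀); moreover y is real-analytic. -/

import Mathlib

open Filter Topology

noncomputable section

/-- real-analytic implicit function theorem in Banach spaces: let
`F : G ⊂ X × Y → Z` be real-analytic with `F(x₀,y₀) = 0` and the partial Fréchet
derivative `F'_y(x₀,y₀)` invertible.  Then there are neighborhoods `U(x₀)`, `U(y₀)` with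
`U(x₀) × U(y₀) ⊆ G` and a unique map `y : U(x₀) → U(y₀)` with `F(x, y(x)) = 0` on
`U(x₀)`; moreover `y` is real-analytic. -/
theorem stmt_14 {X Y Z : Type*}
    [NormedAddCommGroup X] [NormedSpace ℝ X] [CompleteSpace X]
    [NormedAddCommGroup Y] [NormedSpace ℝ Y] [CompleteSpace Y]
    [NormedAddCommGroup Z] [NormedSpace ℝ Z] [CompleteSpace Z]
    (G : Set (X × Y)) (hG : IsOpen G) (F : X × Y → Z)
    (hF : AnalyticOnNhd ℝ F G)
    (x₀ : X) (y₀ : Y) (hmem : (x₀, y₀) ∈ G) (hzero : F (x₀, y₀) = 0)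
    (hinv : Function.Bijective (fderiv ℝ (fun y => F (x₀, y)) y₀)) :
    ∃ U ∈ 𝓝 x₀, ∃ V ∈ 𝓝 y₀, U ×ˢ V ⊆ G ∧
      ∃ g : X → Y, AnalyticOnNhd ℝ g U ∧
        (∀ x ∈ U, g x ∈ V ∧ F (x, g x) = 0) ∧
        ∀ x ∈ U, ∀ y ∈ V, F (x, y) = 0 → y = g x := by
  classical
  have hFa : AnalyticAt ℝ F (x₀, y₀) := hF _ hmem
  set Φ : X × Y → X × Z := fun p => (p.1, F p) with hΦdef
  have hΦa : AnalyticAt ℝ Φ (x₀, y₀) := analyticAt_fst.prod hFa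
  set F' : X × Y →L[ℝ] Z := fderiv ℝ F (x₀, y₀) with hF'def
  have hFd : HasStrictFDerivAt F F' (x₀, y₀) := hFa.hasStrictFDerivAt
  -- the partial derivative in `y` is `F' ∘ inr`
  have hpart : fderiv ℝ (fun y => F (x₀, y)) y₀
      = F'.comp (ContinuousLinearMap.inr ℝ X Y) := by
    have h1 : HasFDerivAt (fun y : Y => ((x₀, y) : X × Y))
        (ContinuousLinearMap.inr ℝ X Y) y₀ := HasFDerivAt.prodMk (hasFDerivAt_const x₀ y₀) (hasFDerivAt_id y₀)
    have := (hFd.hasFDerivAt.comp y₀ h1)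
    exact this.fderiv
  set B : Y →L[ℝ] Z := F'.comp (ContinuousLinearMap.inr ℝ X Y) with hBdef
  have hB : Function.Bijective B := hpart ▸ hinv
  -- the derivative of `Φ`
  set D : X × Y →L[ℝ] X × Z := (ContinuousLinearMap.fst ℝ X Y).prod F' with hDdef
  have hΦd : HasStrictFDerivAt Φ D (x₀, y₀) := HasStrictFDerivAt.prodMk (hasStrictFDerivAt_fst) hFd
  have hF'split : ∀ u : X, ∀ v : Y, F' (u, v) = F' (u, 0) + B v := by
    intro u v
    have : (u, v) = (u, (0 : Y)) + ((0 : X), v) := by simp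
    rw [this, map_add]
    simp [hBdef]
  have hDbij : Function.Bijective D := by
    constructor
    · rintro ⟨u, v⟩ ⟨u', v'⟩ h
      simp only [hDdef, ContinuousLinearMap.prod_apply, Prod.mk.injEq,
        ContinuousLinearMap.coe_fst'] at h
      obtain ⟨hu, hFv⟩ := h
      subst hu
      rw [hF'split u v, hF'split u v'] at hFv
      have : B v = B v' := by
        have := add_left_cancel hFv
        exact this
      exact Prod.ext rfl (hB.1 this)
    · rintro ⟨u, w⟩
      obtain ⟨v, hv⟩ := hB.2 (w - F' (u, 0))
      refine ⟨(u, v), ?_⟩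
      simp only [hDdef, ContinuousLinearMap.prod_apply, ContinuousLinearMap.coe_fst']
      rw [hF'split u v, hv]
      simp
  set i : (X × Y) ≃L[ℝ] (X × Z) := ContinuousLinearEquiv.ofBijective D
    (LinearMap.ker_eq_bot.mpr hDbij.1) (LinearMap.range_eq_top.mpr hDbij.2) with hidef
  have hicoe : (i : X × Y →L[ℝ] X × Z) = D :=
    ContinuousLinearEquiv.coe_ofBijective _ _ _
  have hΦd' : HasStrictFDerivAt Φ (i : X × Y →L[ℝ] X × Z) (x₀, y₀) := by
    rw [hicoe]; exact hΦd
  -- the local homeomorphism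
  set Φloc := HasStrictFDerivAt.toOpenPartialHomeomorph (hf := hΦd') (f := Φ) with hΦloc
  have hcoe : (Φloc : X × Y → X × Z) = Φ := HasStrictFDerivAt.toOpenPartialHomeomorph_coe (hf := hΦd') (f := Φ)
  have hsrc : (x₀, y₀) ∈ Φloc.source := HasStrictFDerivAt.mem_toOpenPartialHomeomorph_source (hf := hΦd') (f := Φ)
  have hΦxy : Φ (x₀, y₀) = (x₀, (0 : Z)) := by simp [hΦdef, hzero]
  have htgt : ((x₀, (0 : Z)) : X × Z) ∈ Φloc.target := by
    rw [← hΦxy, ← hcoe]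
    exact Φloc.map_source hsrc
  -- analyticity of the inverse
  have hψa : AnalyticAt ℝ Φloc.symm ((x₀, (0 : Z)) : X × Z) := by
    rw [← hΦxy, ← hcoe]
    refine Φloc.analyticAt_symm' (i := i) hsrc ?_ ?_
    · rw [hcoe]; exact hΦa
    · rw [hcoe, hΦd.hasFDerivAt.fderiv, hicoe]
  -- the implicit function
  set g : X → Y := fun x => (Φloc.symm (x, 0)).2 with hgdef
  have hxz : AnalyticAt ℝ (fun x : X => ((x, (0 : Z)) : X × Z)) x₀ :=
    analyticAt_id.prod analyticAt_const
  have hga : AnalyticAt ℝ g x₀ := by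
    have h1 : AnalyticAt ℝ (⇑Φloc.symm ∘ (fun x : X => ((x, (0 : Z)) : X × Z))) x₀ :=
      AnalyticAt.comp (f := fun x : X => ((x, (0 : Z)) : X × Z)) (x := x₀) hψa hxz
    have h2 : AnalyticAt ℝ (Prod.snd ∘ (⇑Φloc.symm ∘ fun x : X => ((x, (0 : Z)) : X × Z))) x₀ :=
      analyticAt_snd.comp h1
    exact h2
  have hψ0 : Φloc.symm ((x₀, (0 : Z)) : X × Z) = (x₀, y₀) := by
    rw [← hΦxy, ← hcoe]
    exact Φloc.left_inv hsrc
  -- a basic neighborhood inside both `G` and the source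
  have hos : IsOpen (Φloc.source ∩ G) := Φloc.open_source.inter hG
  have hxyos : (x₀, y₀) ∈ Φloc.source ∩ G := ⟨hsrc, hmem⟩
  obtain ⟨U₁, hU₁, V, hV, hUV⟩ : ∃ U₁ ∈ 𝓝 x₀, ∃ V ∈ 𝓝 y₀, U₁ ×ˢ V ⊆ Φloc.source ∩ G :=
    mem_nhds_prod_iff.mp (hos.mem_nhds hxyos)
  -- key fact: for x with (x,0) in the target, Φ (Φloc.symm (x,0)) = (x,0)
  have hkey : ∀ x : X, ((x, (0 : Z)) : X × Z) ∈ Φloc.target →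
      (Φloc.symm (x, 0)).1 = x ∧ F (Φloc.symm (x, 0)) = 0 := by
    intro x hx
    have := Φloc.right_inv hx
    rw [hcoe] at this
    have h1 : ((Φloc.symm (x, 0)).1, F (Φloc.symm (x, 0))) = ((x : X), (0 : Z)) := this
    exact ⟨congrArg Prod.fst h1, congrArg Prod.snd h1⟩
  -- the sets forming U
  have hT : {x : X | ((x, (0 : Z)) : X × Z) ∈ Φloc.target} ∈ 𝓝 x₀ := by
    have hc : Continuous (fun x : X => ((x, (0 : Z)) : X × Z)) := by fun_prop
    exact hc.continuousAt.preimage_mem_nhds (Φloc.open_target.mem_nhds htgt)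
  have hcont : ContinuousAt (fun x : X => Φloc.symm (x, 0)) x₀ := by
    have h1 : ContinuousAt Φloc.symm ((x₀, (0 : Z)) : X × Z) :=
      Φloc.symm.continuousAt htgt
    exact ContinuousAt.comp (f := fun x : X => ((x, (0 : Z)) : X × Z)) (x := x₀) h1
      (by fun_prop)
  have hP : {x : X | Φloc.symm (x, 0) ∈ U₁ ×ˢ V} ∈ 𝓝 x₀ := by
    apply hcont.preimage_mem_nhds
    rw [hψ0, nhds_prod_eq]
    exact Filter.prod_mem_prod hU₁ hV
  have hA : {x : X | AnalyticAt ℝ g x} ∈ 𝓝 x₀ := hga.eventually_analyticAt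
  refine ⟨U₁ ∩ ({x : X | ((x, (0 : Z)) : X × Z) ∈ Φloc.target}
      ∩ ({x : X | Φloc.symm (x, 0) ∈ U₁ ×ˢ V} ∩ {x : X | AnalyticAt ℝ g x})), ?_, V, hV, ?_, g, ?_, ?_, ?_⟩
  · exact Filter.inter_mem hU₁ (Filter.inter_mem hT (Filter.inter_mem hP hA))
  · exact fun p hp => (hUV ⟨hp.1.1, hp.2⟩).2
  · exact fun x hx => hx.2.2.2
  · rintro x ⟨hx1, hx2, hx3, _⟩
    obtain ⟨hfst, hFz⟩ := hkey x hx2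
    have hxg : (x, g x) = Φloc.symm (x, 0) := by
      rw [hgdef]
      exact Prod.ext hfst.symm rfl
    have hx3' : Φloc.symm (x, 0) ∈ U₁ ×ˢ V := hx3
    rw [← hxg] at hx3'
    exact ⟨hx3'.2, by rw [hxg]; exact hFz⟩
  · rintro x ⟨hx1, hx2, hx3, _⟩ y hy hFxy
    obtain ⟨hfst, hFz⟩ := hkey x hx2
    have hxg : (x, g x) = Φloc.symm (x, 0) := by
      rw [hgdef]
      exact Prod.ext hfst.symm rfl
    have hmem1 : ((x, y) : X × Y) ∈ Φloc.source := (hUV ⟨hx1, hy⟩).1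
    have hx3' : Φloc.symm (x, 0) ∈ U₁ ×ˢ V := hx3
    rw [← hxg] at hx3'
    have hmem2 : ((x, g x) : X × Y) ∈ Φloc.source := (hUV hx3').1
    have hinj := Φloc.injOn hmem1 hmem2
    have hΦeq : Φ (x, y) = Φ (x, g x) := by
      rw [hΦdef]
      simp only
      rw [hFxy, hxg, hFz]
    have : ((x, y) : X × Y) = (x, g x) := by
      apply hinj
      rw [hcoe]; exact hΦeq
    exact (congrArg Prod.snd this)
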